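/- Let d ≥ 2, α ∈ (0,2), and let E be a real d×d matrix all of whose eigenvalues have real part strictly greater than 1, q = trace(E) (so that q > d > α). Let φ : ℝ^d → [0,∞) be continuous, E-homogeneous (φ(c^E x) = c·φ(x) for all c > 0, x ∈ ℝ^d) and such that φ(x) > 0 for x ≠ 0. Then for every nonempty open set U ⊆ ℝ^d and every y ∈ U with y ≠ 0: sup_{x ∈ U ∩ ℚ^d} |φ(x−y)^{1−q/α} − φ(−y)^{1−q/α}| = +∞; consequently ∫_{ℝ^d} ( sup_{x ∈ U ∩ ℚ^d} |φ(x−y)^{1−q/α} − φ(−y)^{1−q/α}| )^α dy = +∞. -/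

import Mathlib

open MeasureTheory ProbabilityTheory Filter Matrix Real
open scoped ENNReal NNReal

noncomputable section

/-- `c ^ A := exp((log c) • A)` for a real square matrix `A` and `c > 0`. -/
def matPow {d : ℕ} (c : ℝ) (A : Matrix (Fin d) (Fin d) ℝ) : Matrix (Fin d) (Fin d) ℝ :=
  NormedSpace.exp (Real.log c • A)

/-- `x ∈ ℚ^d`: all the coordinates of `x` are rational. -/
def HasRationalCoords {d : ℕ} (x : EuclideanSpace ℝ (Fin d)) : Prop :=
  ∀ i, ∃ r : ℚ, x i = (r : ℝ)

/-- Any root of the characteristic polynomial of a complex matrix lies in its spectrum. -/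
lemma aux_root_mem_spectrum {d : ℕ} (M : Matrix (Fin d) (Fin d) ℂ) (μ : ℂ)
    (h : M.charpoly.IsRoot μ) : μ ∈ spectrum ℂ M := by
  rw [spectrum.mem_iff]
  intro hu
  rw [Matrix.isUnit_iff_isUnit_det] at hu
  have hdet : (algebraMap ℂ (Matrix (Fin d) (Fin d) ℂ) μ - M).det = M.charpoly.eval μ := by
    rw [Matrix.charpoly, eval_det, matPolyEquiv_eval_eq_map]
    congr 1
    ext i j
    rcases eq_or_ne i j with rfl | hij
    · simp [charmatrix_apply_eq, Matrix.algebraMap_matrix_apply]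
    · simp [charmatrix_apply_ne _ _ _ hij, Matrix.algebraMap_matrix_apply, hij]
  rw [hdet, h.eq_zero] at hu
  exact hu.ne_zero rfl

/-- If all complex eigenvalues of a real matrix have real part at least `1`,
then its trace is at least the dimension. -/
lemma aux_trace_ge_card {d : ℕ} (E : Matrix (Fin d) (Fin d) ℝ)
    (hspec : ∀ μ ∈ spectrum ℂ (E.map (Complex.ofReal ·)), 1 < μ.re) :
    (d : ℝ) ≤ E.trace := by
  set M := E.map (Complex.ofReal ·) with hM
  have htr : M.trace = (E.trace : ℂ) := by
    simp [Matrix.trace, hM, Matrix.map_apply, Matrix.diag]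
  have hsum : M.trace = M.charpoly.roots.sum := Matrix.trace_eq_sum_roots_charpoly M
  have hcard : Multiset.card M.charpoly.roots = d := by
    rw [Polynomial.splits_iff_card_roots.mp
      (IsAlgClosed.splits M.charpoly)]
    simp [M.charpoly_natDegree_eq_dim]
  have hre : E.trace = (Multiset.map Complex.re M.charpoly.roots).sum := by
    have h0 := congrArg Complex.re (htr.symm.trans hsum)
    have h2 : M.charpoly.roots.sum.re = (Multiset.map Complex.re M.charpoly.roots).sum := by
      simpa using map_multiset_sum Complex.reAddGroupHom M.charpoly.roots
    simpa [h2] using h0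
  have hb : ∀ x ∈ M.charpoly.roots.map Complex.re, (1:ℝ) ≤ x := by
    intro x hx
    obtain ⟨μ, hμ, rfl⟩ := Multiset.mem_map.mp hx
    exact (hspec μ (aux_root_mem_spectrum M μ ((Polynomial.mem_roots'.mp hμ).2))).le
  have hmain := Multiset.card_nsmul_le_sum hb
  rw [hre]
  simpa [hcard] using hmain

/-- Near any point of `ℝ^d` (`d > 0`) there is a distinct point with rational coordinates. -/
lemma aux_exists_ratPoint_near {d : ℕ} (hd : 0 < d) (y : EuclideanSpace ℝ (Fin d)) {ρ : ℝ}
    (hρ : 0 < ρ) :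
    ∃ x : EuclideanSpace ℝ (Fin d), HasRationalCoords x ∧ x ≠ y ∧ dist x y < ρ := by
  set δ : ℝ := ρ / d with hδdef
  have hδ : 0 < δ := div_pos hρ (by exact_mod_cast hd)
  choose r hr1 hr2 using fun i : Fin d => exists_rat_btwn (show y i < y i + δ by linarith)
  refine ⟨(WithLp.equiv 2 _).symm (fun i => (r i : ℝ)), ?_, ?_, ?_⟩
  · intro i; exact ⟨r i, rfl⟩
  · intro h
    have h0 := congrFun (congrArg (WithLp.equiv 2 (Fin d → ℝ)) h) ⟨0, hd⟩
    simp only [Equiv.apply_symm_apply] at h0; change _ = y.ofLp _ at h0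
    have h1 := hr1 ⟨0, hd⟩
    linarith [h0 ▸ h1]
  · have hd' : ∀ i, dist (((WithLp.equiv 2 (Fin d → ℝ)).symm (fun i => (r i : ℝ))) i) (y i) < δ := by
      intro i
      rw [Real.dist_eq, abs_lt]
      simp only [WithLp.equiv_symm_apply, WithLp.ofLp_toLp]
      constructor <;> [linarith [hr1 i]; linarith [hr2 i]]
    rw [EuclideanSpace.dist_eq]
    have hsum : (∑ i, dist (((WithLp.equiv 2 (Fin d → ℝ)).symm (fun i => (r i : ℝ))) i) (y i) ^ 2)
        < ∑ _i : Fin d, δ ^ 2 := by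
      apply Finset.sum_lt_sum_of_nonempty
      · exact Finset.univ_nonempty_iff.mpr ⟨⟨0, hd⟩⟩
      · intro i _
        have h3 := hd' i
        have hnn : (0:ℝ) ≤ dist (((WithLp.equiv 2 (Fin d → ℝ)).symm (fun i => (r i : ℝ))) i) (y i) :=
          dist_nonneg
        nlinarith
    have h1 : Real.sqrt (∑ i, dist (((WithLp.equiv 2 (Fin d → ℝ)).symm (fun i => (r i : ℝ))) i) (y i) ^ 2)
        < Real.sqrt (d * δ ^ 2) := by
      apply Real.sqrt_lt_sqrt
      · positivity
      · simpa using hsum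
    have h2 : Real.sqrt (d * δ ^ 2) ≤ ρ := by
      rw [Real.sqrt_mul (by positivity), Real.sqrt_sq hδ.le]
      have hsd : Real.sqrt d ≤ d := by
        nlinarith [Real.sq_sqrt (show (0:ℝ) ≤ d by positivity), Real.sqrt_nonneg (d:ℝ),
          show (1:ℝ) ≤ d by exact_mod_cast hd]
      calc Real.sqrt d * δ ≤ d * δ := by nlinarith
        _ = ρ := by rw [hδdef]; field_simp [(Nat.cast_pos.mpr hd).ne']
    linarith

/-- Let `d ≥ 2`, `α ∈ (0,2)`, `E` with all eigenvalues of real part `> 1`,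
`q = trace E` and `φ` a continuous, `E`-homogeneous function, positive off `0`. Then for
every nonempty open `U` and every `y ∈ U`, `y ≠ 0`, the supremum over `x ∈ U ∩ ℚ^d` of
`|φ(x-y)^{1-q/α} - φ(-y)^{1-q/α}|` is infinite (i.e. unbounded above), and consequently
`∫_{ℝ^d} (sup_{x ∈ U ∩ ℚ^d} |φ(x-y)^{1-q/α} - φ(-y)^{1-q/α}|)^α dy = ∞`. -/
theorem moving_average_kernel_unbounded {d : ℕ} (hd : 2 ≤ d)
    (α : ℝ) (hα : α ∈ Set.Ioo (0 : ℝ) 2)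
    (E : Matrix (Fin d) (Fin d) ℝ)
    (hspec : ∀ μ ∈ spectrum ℂ (E.map (Complex.ofReal ·)), 1 < μ.re)
    (φ : EuclideanSpace ℝ (Fin d) → ℝ) (hφc : Continuous φ) (hφnn : ∀ x, 0 ≤ φ x)
    (hφpos : ∀ x, x ≠ 0 → 0 < φ x)
    (hφhom : ∀ c : ℝ, 0 < c → ∀ x : EuclideanSpace ℝ (Fin d),
      φ (WithLp.toLp 2 ((matPow c E).mulVec x)) = c * φ x)
    (U : Set (EuclideanSpace ℝ (Fin d))) (hU : IsOpen U) (hUne : U.Nonempty) :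
    (∀ y ∈ U, y ≠ 0 → ∀ M : ℝ, ∃ x ∈ U, HasRationalCoords x ∧
      M ≤ |φ (x - y) ^ (1 - E.trace / α) - φ (-y) ^ (1 - E.trace / α)|) ∧
    (∫⁻ y : EuclideanSpace ℝ (Fin d),
        (⨆ x : {x : EuclideanSpace ℝ (Fin d) // x ∈ U ∧ HasRationalCoords x},
          ENNReal.ofReal
            |φ ((x : EuclideanSpace ℝ (Fin d)) - y) ^ (1 - E.trace / α) -
              φ (-y) ^ (1 - E.trace / α)|) ^ α) = ⊤ := by
  have hd0 : 0 < d := lt_of_lt_of_le (by norm_num) hd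
  obtain ⟨hα0, hα2⟩ := hα
  have hq : α < E.trace :=
    lt_of_lt_of_le (lt_of_lt_of_le hα2 (by exact_mod_cast hd)) (aux_trace_ge_card E hspec)
  set p : ℝ := 1 - E.trace / α with hpdef
  have hp : p < 0 := by
    have : 1 < E.trace / α := (one_lt_div hα0).mpr hq
    simp only [hpdef]; linarith
  have hφ0 : φ 0 = 0 := by
    have h2 := hφhom 2 (by norm_num) 0
    rw [WithLp.ofLp_zero, Matrix.mulVec_zero, WithLp.toLp_zero] at h2
    linarith
  have key : ∀ y ∈ U, y ≠ 0 → ∀ M : ℝ, ∃ x ∈ U, HasRationalCoords x ∧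
      M ≤ |φ (x - y) ^ p - φ (-y) ^ p| := by
    intro y hy hy0 M
    set B : ℝ := φ (-y) ^ p with hB
    set T : ℝ := |M| + |B| + 1 with hT
    have hTpos : 0 < T := by positivity
    set ε : ℝ := T ^ (1/p) with hε
    have hεpos : 0 < ε := Real.rpow_pos_of_pos hTpos _
    have hεp : ε ^ p = T := by
      rw [hε, ← Real.rpow_mul hTpos.le, one_div, inv_mul_cancel₀ hp.ne, Real.rpow_one]
    obtain ⟨δ, hδpos, hδ⟩ := Metric.continuous_iff.mp hφc 0 ε hεpos
    obtain ⟨rr, hrr, hball⟩ := Metric.isOpen_iff.mp hU y hy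
    have hρ : 0 < min δ rr := lt_min hδpos hrr
    obtain ⟨x, hxrat, hxy, hxd⟩ := aux_exists_ratPoint_near hd0 y hρ
    have hxU : x ∈ U := hball (Metric.mem_ball.mpr (lt_of_lt_of_le hxd (min_le_right _ _)))
    have hsub : dist (x - y) 0 = dist x y := by
      rw [dist_zero_right, dist_eq_norm]
    have hφsmall : φ (x - y) < ε := by
      have := hδ (x - y) (by rw [hsub]; exact lt_of_lt_of_le hxd (min_le_left _ _))
      rw [Real.dist_eq, hφ0, sub_zero, abs_of_nonneg (hφnn _)] at this
      exact this
    have hφposxy : 0 < φ (x - y) := hφpos _ (sub_ne_zero.mpr hxy)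
    have hrge : T ≤ φ (x - y) ^ p := by
      rw [← hεp]
      exact Real.rpow_le_rpow_of_nonpos hφposxy hφsmall.le hp.le
    refine ⟨x, hxU, hxrat, ?_⟩
    have h1 : φ (x - y) ^ p - B ≤ |φ (x - y) ^ p - B| := le_abs_self _
    have h2 : B ≤ |B| := le_abs_self _
    have h3 : M ≤ |M| := le_abs_self _
    linarith
  refine ⟨key, ?_⟩
  have htop : ∀ y : EuclideanSpace ℝ (Fin d), y ∈ U → y ≠ 0 →
      (⨆ x : {x : EuclideanSpace ℝ (Fin d) // x ∈ U ∧ HasRationalCoords x},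
        ENNReal.ofReal
          |φ ((x : EuclideanSpace ℝ (Fin d)) - y) ^ p - φ (-y) ^ p|) = ⊤ := by
    intro y hy hy0
    apply ENNReal.eq_top_of_forall_nnreal_le
    intro r
    obtain ⟨x, hxU, hxr, hxM⟩ := key y hy hy0 r
    calc (r : ℝ≥0∞) = ENNReal.ofReal (r : ℝ) := ENNReal.ofReal_coe_nnreal.symm
      _ ≤ ENNReal.ofReal |φ (x - y) ^ p - φ (-y) ^ p| := ENNReal.ofReal_le_ofReal hxM
      _ ≤ _ := le_iSup (fun x : {x : EuclideanSpace ℝ (Fin d) // x ∈ U ∧ HasRationalCoords x} =>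
            ENNReal.ofReal |φ ((x : EuclideanSpace ℝ (Fin d)) - y) ^ p - φ (-y) ^ p|)
            ⟨x, hxU, hxr⟩
  set S : Set (EuclideanSpace ℝ (Fin d)) := U \ {0} with hS
  have hSopen : IsOpen S := hU.sdiff isClosed_singleton
  have hSne : S.Nonempty := by
    obtain ⟨y, hy⟩ := hUne
    obtain ⟨rr, hrr, hball⟩ := Metric.isOpen_iff.mp hU y hy
    by_cases hy0 : y = 0
    · obtain ⟨x, _, hxy, hxd⟩ := aux_exists_ratPoint_near hd0 y hrr
      exact ⟨x, hball (Metric.mem_ball.mpr hxd), by simpa [hy0] using hxy⟩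
    · exact ⟨y, hy, hy0⟩
  have hSpos : 0 < volume S := hSopen.measure_pos volume hSne
  rw [eq_top_iff]
  calc (⊤ : ℝ≥0∞) = ⊤ * volume S := (ENNReal.top_mul hSpos.ne').symm
    _ = ∫⁻ _ in S, (⊤ : ℝ≥0∞) := (setLIntegral_const S ⊤).symm
    _ = ∫⁻ y in S,
        (⨆ x : {x : EuclideanSpace ℝ (Fin d) // x ∈ U ∧ HasRationalCoords x},
          ENNReal.ofReal
            |φ ((x : EuclideanSpace ℝ (Fin d)) - y) ^ p - φ (-y) ^ p|) ^ α := by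
        apply setLIntegral_congr_fun hSopen.measurableSet
        intro y hy
        beta_reduce
        rw [htop y hy.1 hy.2, ENNReal.top_rpow_of_pos hα0]
    _ ≤ _ := setLIntegral_le_lintegral S _
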